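/- Let $U \subseteq \mathbb{C}$ be an open set, $\rho : U \to \mathbb{C}$ a holomorphic function with $|\rho(z)| < 1$ and $\rho'(z) \neq 0$ for all $z \in U$. Then the function $r(z,\bar z) := \frac{2|\rho'(z)|}{1-|\rho(z)|^2}$ satisfies the PDE $r \, r_{z\bar z} - |r_z|^2 - \tfrac{1}{4} r^4 = 0$ on $U$ (where subscripts denote Wirtinger derivatives). -/

import Mathlib

open Complex

/-- Wirtinger derivative `∂/∂z` of a function `f : ℂ → ℂ` (viewed as a smooth map `ℝ² → ℂ`). -/
noncomputable def wd (f : ℂ → ℂ) (z : ℂ) : ℂ :=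
  (1 / 2 : ℂ) * (fderiv ℝ f z 1 - Complex.I * fderiv ℝ f z Complex.I)

/-- Wirtinger derivative `∂/∂z̄` of a function `f : ℂ → ℂ`. -/
noncomputable def wdb (f : ℂ → ℂ) (z : ℂ) : ℂ :=
  (1 / 2 : ℂ) * (fderiv ℝ f z 1 + Complex.I * fderiv ℝ f z Complex.I)

noncomputable def wlin (a b : ℂ) : ℂ →L[ℝ] ℂ :=
  a • (ContinuousLinearMap.id ℝ ℂ) + b • (Complex.conjCLE : ℂ ≃L[ℝ] ℂ).toContinuousLinearMap

@[simp] lemma wlin_apply (a b v : ℂ) : wlin a b v = a * v + b * (starRingEnd ℂ) v := by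
  simp [wlin, Complex.conjCLE]

lemma wlin_ext {L : ℂ →L[ℝ] ℂ} {a b : ℂ} (h1 : L 1 = a + b)
    (hI : L Complex.I = a * Complex.I - b * Complex.I) : L = wlin a b := by
  ext z
  have hz : z = z.re • (1 : ℂ) + z.im • Complex.I := by
    simp [Complex.real_smul, Complex.re_add_im]
  rw [hz, map_add, map_smul, map_smul, map_add, map_smul, map_smul, h1, hI]
  simp [Complex.conj_I, Complex.real_smul]
  ring

def HasW (f : ℂ → ℂ) (z a b : ℂ) : Prop := HasFDerivAt f (wlin a b) z

lemma HasW.wd_eq {f : ℂ → ℂ} {z a b : ℂ} (h : HasW f z a b) : wd f z = a := by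
  rw [wd, h.fderiv]
  simp [Complex.conj_I]
  linear_combination ((b - a) / 2) * Complex.I_sq

lemma HasW.wdb_eq {f : ℂ → ℂ} {z a b : ℂ} (h : HasW f z a b) : wdb f z = b := by
  rw [wdb, h.fderiv]
  simp [Complex.conj_I]
  linear_combination ((a - b) / 2) * Complex.I_sq

lemma hasW_const (c : ℂ) (z : ℂ) : HasW (fun _ => c) z 0 0 := by
  refine HasFDerivAt.congr_fderiv (hasFDerivAt_const (𝕜 := ℝ) c z) ?_
  exact wlin_ext (by simp) (by simp)

lemma hasW_holo {f : ℂ → ℂ} {z : ℂ} (hf : DifferentiableAt ℂ f z) :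
    HasW f z (deriv f z) 0 := by
  refine HasFDerivAt.congr_fderiv ((hf.hasDerivAt.hasFDerivAt).restrictScalars ℝ) ?_
  refine wlin_ext ?_ ?_ <;> simp <;> ring

lemma HasW.add {f g : ℂ → ℂ} {z a b a' b' : ℂ} (hf : HasW f z a b) (hg : HasW g z a' b') :
    HasW (fun w => f w + g w) z (a + a') (b + b') := by
  have h := HasFDerivAt.add hf hg
  refine HasFDerivAt.congr_fderiv h ?_
  refine wlin_ext ?_ ?_ <;>
    simp [ContinuousLinearMap.add_apply] <;> ring

lemma HasW.sub {f g : ℂ → ℂ} {z a b a' b' : ℂ} (hf : HasW f z a b) (hg : HasW g z a' b') :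
    HasW (fun w => f w - g w) z (a - a') (b - b') := by
  have h := HasFDerivAt.sub hf hg
  refine HasFDerivAt.congr_fderiv h ?_
  refine wlin_ext ?_ ?_ <;>
    simp [ContinuousLinearMap.sub_apply] <;> ring

lemma HasW.mul {f g : ℂ → ℂ} {z a b a' b' : ℂ} (hf : HasW f z a b) (hg : HasW g z a' b') :
    HasW (fun w => f w * g w) z (f z * a' + g z * a) (f z * b' + g z * b) := by
  have h := HasFDerivAt.mul (𝕜 := ℝ) hf hg
  refine HasFDerivAt.congr_fderiv h ?_
  refine wlin_ext ?_ ?_ <;>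
    simp [ContinuousLinearMap.add_apply, ContinuousLinearMap.smul_apply, smul_eq_mul] <;> ring

lemma HasW.conj {f : ℂ → ℂ} {z a b : ℂ} (hf : HasW f z a b) :
    HasW (fun w => (starRingEnd ℂ) (f w)) z ((starRingEnd ℂ) b) ((starRingEnd ℂ) a) := by
  have h := ((Complex.conjCLE : ℂ ≃L[ℝ] ℂ).toContinuousLinearMap.hasFDerivAt).comp z hf
  refine HasFDerivAt.congr_fderiv h ?_
  refine wlin_ext ?_ ?_ <;>
    simp [ContinuousLinearMap.comp_apply, Complex.conjCLE, Complex.conj_I, map_add, map_mul] <;> ring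

lemma HasW.cderiv_comp {φ f : ℂ → ℂ} {z a b c : ℂ} (hφ : HasDerivAt φ c (f z))
    (hf : HasW f z a b) : HasW (fun w => φ (f w)) z (c * a) (c * b) := by
  have h := (hφ.hasFDerivAt.restrictScalars ℝ).comp z hf
  refine HasFDerivAt.congr_fderiv h ?_
  refine wlin_ext ?_ ?_ <;>
    simp [ContinuousLinearMap.comp_apply, ContinuousLinearMap.smulRight_apply, smul_eq_mul,
      Complex.conj_I] <;> ring

lemma HasW.inv {f : ℂ → ℂ} {z a b : ℂ} (hf : HasW f z a b) (h0 : f z ≠ 0) :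
    HasW (fun w => (f w)⁻¹) z (-(f z ^ 2)⁻¹ * a) (-(f z ^ 2)⁻¹ * b) :=
  HasW.cderiv_comp (hasDerivAt_inv h0) hf

lemma wd_congr {f g : ℂ → ℂ} {z : ℂ} (h : f =ᶠ[nhds z] g) : wd f z = wd g z := by
  rw [wd, wd, h.fderiv_eq]

lemma wdb_congr {f g : ℂ → ℂ} {z : ℂ} (h : f =ᶠ[nhds z] g) : wdb f z = wdb g z := by
  rw [wdb, wdb, h.fderiv_eq]

set_option maxHeartbeats 2000000 in
/-- Liouville's formula gives solutions of `r r_{z z̄} - |r_z|² - r⁴/4 = 0`. -/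
theorem stmt0 (U : Set ℂ) (hU : IsOpen U) (ρ : ℂ → ℂ)
    (hρ : DifferentiableOn ℂ ρ U)
    (hρ1 : ∀ z ∈ U, ‖ρ z‖ < 1)
    (hρ' : ∀ z ∈ U, deriv ρ z ≠ 0)
    (r : ℂ → ℂ)
    (hr : ∀ z ∈ U,
      r z = ((2 * ‖deriv ρ z‖ / (1 - ‖ρ z‖ ^ 2) : ℝ) : ℂ)) :
    ∀ z ∈ U,
      r z * wdb (wd r) z - (Complex.normSq (wd r z) : ℂ) - (1 / 4 : ℂ) * (r z) ^ 4 = 0 := by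
  intro z₀ hz₀
  have hAn : AnalyticOnNhd ℂ ρ U := hρ.analyticOnNhd hU
  have hAn' : AnalyticOnNhd ℂ (deriv ρ) U := hAn.deriv
  have hρdDiff : ∀ w ∈ U, DifferentiableAt ℂ (deriv ρ) w := fun w hw => (hAn' w hw).differentiableAt
  have hρDiff : ∀ w ∈ U, DifferentiableAt ℂ ρ w := fun w hw => (hAn w hw).differentiableAt
  have hc0 : deriv ρ z₀ ≠ 0 := hρ' z₀ hz₀
  set c : ℂ := (deriv ρ z₀) ^ ((1:ℂ)/2) with hcdef
  have hc2 : c ^ 2 = deriv ρ z₀ := by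
    rw [hcdef, sq, ← Complex.cpow_add _ _ hc0]; norm_num
  set V : Set ℂ := U ∩ (fun w => deriv ρ w / deriv ρ z₀) ⁻¹' Complex.slitPlane with hVdef
  have hVopen : IsOpen V := by
    apply ContinuousOn.isOpen_inter_preimage ?_ hU isOpen_slitPlane
    exact fun w hw => ((hρdDiff w hw).continuousAt.continuousWithinAt.div_const _)
  have hz₀V : z₀ ∈ V := ⟨hz₀, by simp [Set.mem_preimage, div_self hc0, Complex.one_mem_slitPlane]⟩
  obtain ⟨h, hhd, hsq⟩ : ∃ g : ℂ → ℂ, (∀ w ∈ V, DifferentiableAt ℂ g w)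
      ∧ (∀ w ∈ V, g w ^ 2 = deriv ρ w) := by
    refine ⟨fun w => c * Complex.exp ((1/2 : ℂ) * Complex.log (deriv ρ w / deriv ρ z₀)), ?_, ?_⟩
    · intro w hw
      have hlog : DifferentiableAt ℂ (fun w => Complex.log (deriv ρ w / deriv ρ z₀)) w :=
        ((hρdDiff w hw.1).div_const _).clog hw.2
      exact ((hlog.const_mul ((1:ℂ)/2)).cexp).const_mul c
    · intro w hw
      have h0 : deriv ρ w / deriv ρ z₀ ≠ 0 := div_ne_zero (hρ' w hw.1) hc0
      simp only
      rw [mul_pow, hc2, sq, ← Complex.exp_add,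
        show (1/2 : ℂ) * Complex.log (deriv ρ w / deriv ρ z₀)
            + (1/2 : ℂ) * Complex.log (deriv ρ w / deriv ρ z₀)
            = Complex.log (deriv ρ w / deriv ρ z₀) by ring,
        Complex.exp_log h0, mul_div_cancel₀ _ hc0]
  have hhDO : DifferentiableOn ℂ h V := fun w hw => (hhd w hw).differentiableWithinAt
  have hhAn : AnalyticOnNhd ℂ h V := hhDO.analyticOnNhd hVopen
  have hdh : ∀ w ∈ V, DifferentiableAt ℂ (deriv h) w :=
    fun w hw => (hhAn.deriv w hw).differentiableAt
  have hD0 : ∀ w ∈ U, (1 : ℂ) - ρ w * (starRingEnd ℂ) (ρ w) ≠ 0 := by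
    intro w hw
    rw [Complex.mul_conj]
    have h1 : normSq (ρ w) < 1 := by
      rw [← Complex.sq_norm]; nlinarith [hρ1 w hw, norm_nonneg (ρ w)]
    have h2 : (1:ℝ) - normSq (ρ w) ≠ 0 := by nlinarith
    rw [show (1 : ℂ) - (normSq (ρ w) : ℝ) = ((1 - normSq (ρ w) : ℝ) : ℂ) by push_cast; ring]
    exact Complex.ofReal_ne_zero.mpr h2
  have hrV : ∀ w ∈ V,
      r w = 2 * h w * (starRingEnd ℂ) (h w) * ((1:ℂ) - ρ w * (starRingEnd ℂ) (ρ w))⁻¹ := by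
    intro w hw
    have e1 : ((‖deriv ρ w‖ : ℝ) : ℂ) = h w * (starRingEnd ℂ) (h w) := by
      rw [← hsq w hw, norm_pow, Complex.sq_norm, Complex.mul_conj]
    have e2 : (((1 - ‖ρ w‖^2) : ℝ) : ℂ) = 1 - ρ w * (starRingEnd ℂ) (ρ w) := by
      rw [Complex.mul_conj, ← Complex.sq_norm]
      push_cast
      ring
    rw [hr w hw.1, Complex.ofReal_div, Complex.ofReal_mul, Complex.ofReal_ofNat, e1, e2,
      div_eq_mul_inv]
    ring
  -- Wirtinger derivative of the denominator function
  have WD : ∀ w ∈ V, HasW (fun w => (1:ℂ) - ρ w * (starRingEnd ℂ) (ρ w)) w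
      (0 - (ρ w * (starRingEnd ℂ) 0 + (starRingEnd ℂ) (ρ w) * deriv ρ w))
      (0 - (ρ w * (starRingEnd ℂ) (deriv ρ w) + (starRingEnd ℂ) (ρ w) * 0)) :=
    fun w hw => (hasW_const 1 w).sub
      ((hasW_holo (hρDiff w hw.1)).mul (hasW_holo (hρDiff w hw.1)).conj)
  have hwd : ∀ w ∈ V, wd r w
      = 2 * (starRingEnd ℂ) (h w)
        * (deriv h w * ((1:ℂ) - ρ w * (starRingEnd ℂ) (ρ w))
            + h w * deriv ρ w * (starRingEnd ℂ) (ρ w))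
        * (((1:ℂ) - ρ w * (starRingEnd ℂ) (ρ w))⁻¹ * ((1:ℂ) - ρ w * (starRingEnd ℂ) (ρ w))⁻¹) := by
    intro w hw
    have hev : r =ᶠ[nhds w]
        (fun w => 2 * h w * (starRingEnd ℂ) (h w) * ((1:ℂ) - ρ w * (starRingEnd ℂ) (ρ w))⁻¹) :=
      Filter.eventuallyEq_of_mem (hVopen.mem_nhds hw) (fun x hx => hrV x hx)
    have W_h := hasW_holo (hhd w hw)
    have W_R := (((hasW_const 2 w).mul W_h).mul W_h.conj).mul
      ((WD w hw).inv (hD0 w hw.1))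
    have hwdR : wd (fun w => 2 * h w * (starRingEnd ℂ) (h w)
        * ((1:ℂ) - ρ w * (starRingEnd ℂ) (ρ w))⁻¹) w = _ := W_R.wd_eq
    rw [wd_congr hev, hwdR]
    simp only [map_zero]
    have hd := hD0 w hw.1
    field_simp
    ring
  have hev2 : wd r =ᶠ[nhds z₀]
      (fun w => 2 * (starRingEnd ℂ) (h w)
        * (deriv h w * ((1:ℂ) - ρ w * (starRingEnd ℂ) (ρ w))
            + h w * deriv ρ w * (starRingEnd ℂ) (ρ w))
        * (((1:ℂ) - ρ w * (starRingEnd ℂ) (ρ w))⁻¹ * ((1:ℂ) - ρ w * (starRingEnd ℂ) (ρ w))⁻¹)) :=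
    Filter.eventuallyEq_of_mem (hVopen.mem_nhds hz₀V) (fun x hx => hwd x hx)
  have W_h0 := hasW_holo (hhd z₀ hz₀V)
  have W_dh0 := hasW_holo (hdh z₀ hz₀V)
  have W_ρ0 := hasW_holo (hρDiff z₀ hz₀)
  have W_dρ0 := hasW_holo (hρdDiff z₀ hz₀)
  have WD0 := WD z₀ hz₀V
  have W_invD0 := WD0.inv (hD0 z₀ hz₀)
  have W_E := (((hasW_const 2 z₀).mul W_h0.conj).mul
      ((W_dh0.mul WD0).add ((W_h0.mul W_dρ0).mul W_ρ0.conj))).mul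
    (W_invD0.mul W_invD0)
  have hwdbE : wdb (fun w => 2 * (starRingEnd ℂ) (h w)
      * (deriv h w * ((1:ℂ) - ρ w * (starRingEnd ℂ) (ρ w))
          + h w * deriv ρ w * (starRingEnd ℂ) (ρ w))
      * (((1:ℂ) - ρ w * (starRingEnd ℂ) (ρ w))⁻¹ * ((1:ℂ) - ρ w * (starRingEnd ℂ) (ρ w))⁻¹)) z₀
      = _ := W_E.wdb_eq
  have hq : deriv ρ z₀ = h z₀ ^ 2 := (hsq z₀ hz₀V).symm
  have hd1 := hD0 z₀ hz₀
  rw [← Complex.mul_conj (wd r z₀), hwd z₀ hz₀V, wdb_congr hev2, hwdbE, hrV z₀ hz₀V, hq]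
  simp only [map_zero, map_mul, map_add, map_sub, map_one, map_inv₀, map_pow, map_ofNat,
    Complex.conj_conj]
  generalize h z₀ = A
  generalize deriv h z₀ = B
  generalize hP : ρ z₀ = P at hd1 ⊢
  rw [show ((1:ℂ) - (starRingEnd ℂ) P * P) = 1 - P * (starRingEnd ℂ) P from by ring]
  generalize hrel : (1:ℂ) - P * (starRingEnd ℂ) P = D0 at hd1 ⊢
  field_simp [hd1]
  rw [← hrel]
  ring
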